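/- Let (A_n)_{n≥1} be a sequence of events on a probability space such that P(A_n) > 1 − ε for all sufficiently large n, and let (a_n)_{n≥1} be a sequence of nonnegative reals with Σ a_n = ∞. Then P(Σ_{n=1}^∞ 1_{A_n} · a_n = ∞) ≥ 1 − ε. -/

import Mathlib

open MeasureTheory
open scoped ENNReal

/-- If `P(Aₙ) > 1 - ε` eventually and `Σ aₙ = ∞` with `aₙ ≥ 0`, then with
probability at least `1 - ε` the series `Σ 1_{Aₙ} aₙ` diverges. -/
theorem indicator_series_diverges
    {Ω : Type*} [MeasurableSpace Ω] (P : Measure Ω) [IsProbabilityMeasure P]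
    (A : ℕ → Set Ω) (hA : ∀ n, MeasurableSet (A n))
    (ε : ℝ) (hε : 0 < ε)
    (hPA : ∃ N : ℕ, ∀ n ≥ N, 1 - ε < (P (A n)).toReal)
    (a : ℕ → ℝ) (ha : ∀ n, 0 ≤ a n)
    (hdiv : ∑' n, ENNReal.ofReal (a n) = ⊤) :
    ENNReal.ofReal (1 - ε) ≤
      P {x | ∑' n, Set.indicator (A n) (fun _ => ENNReal.ofReal (a n)) x = ⊤} := by
  rcases le_or_gt 1 ε with h1 | h1
  · have h0 : ENNReal.ofReal (1 - ε) = 0 := by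
      rw [ENNReal.ofReal_eq_zero]; linarith
    simp [h0]
  obtain ⟨N₀, hN₀⟩ := hPA
  set S : Ω → ℝ≥0∞ := fun x => ∑' n, Set.indicator (A n) (fun _ => ENNReal.ofReal (a n)) x
    with hS
  have hSmeas : Measurable S :=
    Measurable.ennreal_tsum fun n => measurable_const.indicator (hA n)
  have key : ∀ M : ℕ, P {x | S x ≤ (M : ℝ≥0∞)} ≤ ENNReal.ofReal ε := by
    intro M
    by_contra hcon
    push_neg at hcon
    set B := {x | S x ≤ (M : ℝ≥0∞)} with hB
    have hBmeas : MeasurableSet B := hSmeas measurableSet_Iic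
    set δ := P B - ENNReal.ofReal ε with hδ
    have hδpos : 0 < δ := tsub_pos_of_lt hcon
    have hlow : ∀ n ≥ N₀, δ ≤ P (A n ∩ B) := by
      intro n hn
      have hPAn : ENNReal.ofReal (1 - ε) ≤ P (A n) := by
        calc ENNReal.ofReal (1 - ε) ≤ ENNReal.ofReal (P (A n)).toReal :=
              ENNReal.ofReal_le_ofReal (hN₀ n hn).le
          _ = P (A n) := ENNReal.ofReal_toReal (measure_ne_top P _)
      have h1le : 1 ≤ P (A n) + ENNReal.ofReal ε := by
        rw [ENNReal.ofReal_sub _ hε.le, ENNReal.ofReal_one, tsub_le_iff_right] at hPAn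
        exact hPAn
      rw [hδ, tsub_le_iff_right]
      have hle : P (A n) + P B ≤ P (A n) + (P (A n ∩ B) + ENNReal.ofReal ε) := by
        rw [← measure_union_add_inter (A n) hBmeas]
        calc P (A n ∪ B) + P (A n ∩ B) ≤ 1 + P (A n ∩ B) :=
              add_le_add_left prob_le_one _
          _ ≤ (P (A n) + ENNReal.ofReal ε) + P (A n ∩ B) := add_le_add_left h1le _
          _ = P (A n) + (P (A n ∩ B) + ENNReal.ofReal ε) := by ring
      exact (ENNReal.add_le_add_iff_left (measure_ne_top P _)).mp hle
    have hint : ∫⁻ x in B, S x ∂P = ∑' n, ENNReal.ofReal (a n) * P (A n ∩ B) := by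
      rw [hS]
      rw [lintegral_tsum fun n => (measurable_const.indicator (hA n)).aemeasurable]
      congr 1
      ext n
      rw [lintegral_indicator_const (hA n), Measure.restrict_apply (hA n)]
    have hub : ∫⁻ x in B, S x ∂P ≤ (M : ℝ≥0∞) := by
      calc ∫⁻ x in B, S x ∂P ≤ ∫⁻ _ in B, (M : ℝ≥0∞) ∂P :=
            setLIntegral_mono measurable_const fun x hx => hx
        _ = (M : ℝ≥0∞) * P B := setLIntegral_const B _
        _ ≤ (M : ℝ≥0∞) * 1 := mul_le_mul_right prob_le_one _
        _ = (M : ℝ≥0∞) := mul_one _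
    have htail : ∑' n, ENNReal.ofReal (a (n + N₀)) = ⊤ := by
      by_contra htne
      have hfin : (∑ i ∈ Finset.range N₀, ENNReal.ofReal (a i)) ≠ ⊤ :=
        (ENNReal.sum_lt_top.mpr fun i _ => ENNReal.ofReal_lt_top).ne
      have := Summable.sum_add_tsum_nat_add' (f := fun n => ENNReal.ofReal (a n)) (k := N₀) ENNReal.summable
      rw [hdiv] at this
      exact (ENNReal.add_ne_top.mpr ⟨hfin, htne⟩) this
    have hlow2 : (⊤ : ℝ≥0∞) ≤ ∑' n, ENNReal.ofReal (a n) * P (A n ∩ B) := by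
      have h2 : (⊤ : ℝ≥0∞) = ∑' n, ENNReal.ofReal (a (n + N₀)) * δ := by
        rw [ENNReal.tsum_mul_right, htail, ENNReal.top_mul hδpos.ne']
      rw [h2]
      have h3 : ∑' n, ENNReal.ofReal (a (n + N₀)) * δ ≤
          ∑' n, ENNReal.ofReal (a (n + N₀)) * P (A (n + N₀) ∩ B) :=
        ENNReal.tsum_le_tsum fun n => mul_le_mul_right (hlow _ (Nat.le_add_left _ _)) _
      refine h3.trans ?_
      calc ∑' n, ENNReal.ofReal (a (n + N₀)) * P (A (n + N₀) ∩ B)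
          ≤ (∑ i ∈ Finset.range N₀, ENNReal.ofReal (a i) * P (A i ∩ B)) +
            ∑' n, ENNReal.ofReal (a (n + N₀)) * P (A (n + N₀) ∩ B) := le_add_self
        _ = ∑' n, ENNReal.ofReal (a n) * P (A n ∩ B) :=
            Summable.sum_add_tsum_nat_add' ENNReal.summable
    rw [← hint] at hlow2
    exact absurd (top_le_iff.mp (hlow2.trans hub)) (by simp)
  have hDmeas : MeasurableSet {x | S x = ⊤} := hSmeas (measurableSet_singleton ⊤)
  have hcompl : P {x | S x = ⊤}ᶜ ≤ ENNReal.ofReal ε := by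
    have hset : {x | S x = ⊤}ᶜ = ⋃ M : ℕ, {x | S x ≤ (M : ℝ≥0∞)} := by
      ext x
      simp only [Set.mem_compl_iff, Set.mem_setOf_eq, Set.mem_iUnion]
      constructor
      · intro hx
        obtain ⟨M, hM⟩ := ENNReal.exists_nat_gt hx
        exact ⟨M, hM.le⟩
      · rintro ⟨M, hM⟩ h
        rw [h] at hM
        exact absurd (top_le_iff.mp hM) (by simp)
    rw [hset]
    have hmono : Monotone fun M : ℕ => {x | S x ≤ (M : ℝ≥0∞)} := by
      intro M M' h x hx
      simp only [Set.mem_setOf_eq] at hx ⊢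
      exact le_trans hx (by exact_mod_cast h)
    rw [hmono.directed_le.measure_iUnion]
    exact iSup_le key
  calc ENNReal.ofReal (1 - ε) = 1 - ENNReal.ofReal ε := by
        rw [ENNReal.ofReal_sub _ hε.le, ENNReal.ofReal_one]
    _ ≤ 1 - P {x | S x = ⊤}ᶜ := tsub_le_tsub_left hcompl 1
    _ ≤ P {x | S x = ⊤} := by
        rw [tsub_le_iff_right]
        rw [measure_add_measure_compl hDmeas, measure_univ]
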